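/- With λ, μ_1, μ_2, r and v as in the previous construction, and for n ≥ 1 let Z_n ~ geom_n(μ_1/μ_2) (P(Z_n = j) ∝ (μ_1/μ_2)^j on {0,...,n}). Then λ(n) - μ_2 (v(n) - v(n-1)) = (E[λ(Z_n)] - μ_2 (1 - r/μ_1) P(Z_n > 0)) / P(Z_n = n). -/

import Mathlib

open Finset

/-- Boundary drift identity: `λ(n) - μ₂(v(n)-v(n-1))` equals
`(E[λ(Zₙ)] - μ₂(1-r/μ₁) P(Zₙ>0)) / P(Zₙ=n)` with `Zₙ ~ geomₙ(μ₁/μ₂)`. -/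
theorem stmt_5 (lam : ℕ → ℝ) (hlam : ∀ n, 0 ≤ lam n) (mu1 mu2 r : ℝ)
    (hmu1 : 0 < mu1) (hmu2 : 0 < mu2) (hr : 0 < r)
    (v : ℕ → ℝ)
    (hv : ∀ n, v n =
      ∑ j ∈ range n, ∑ k ∈ range (j + 1),
        (1 - (lam k + r) / mu1) * (mu2 / mu1) ^ (j - k))
    (n : ℕ) (hn : 1 ≤ n) :
    lam n - mu2 * (v n - v (n - 1)) =
      ((∑ j ∈ range (n + 1), lam j * (mu1 / mu2) ^ j) /
          (∑ j ∈ range (n + 1), (mu1 / mu2) ^ j) -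
        mu2 * (1 - r / mu1) *
          ((∑ j ∈ range (n + 1), (mu1 / mu2) ^ j - 1) /
            (∑ j ∈ range (n + 1), (mu1 / mu2) ^ j))) /
      ((mu1 / mu2) ^ n / (∑ j ∈ range (n + 1), (mu1 / mu2) ^ j)) := by
  have hm1 : (mu1:ℝ) ≠ 0 := ne_of_gt hmu1
  have hm2 : (mu2:ℝ) ≠ 0 := ne_of_gt hmu2
  set q : ℝ := mu1 / mu2 with hq
  have hqpos : 0 < q := div_pos hmu1 hmu2
  obtain ⟨m, rfl⟩ : ∃ m, n = m + 1 := ⟨n - 1, (Nat.succ_pred_eq_of_pos hn).symm⟩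
  simp only [Nat.add_sub_cancel]
  have hS : 0 < ∑ j ∈ range (m + 2), q ^ j := by
    apply Finset.sum_pos (fun i _ => pow_pos hqpos i)
    exact nonempty_range_add_one
  have hqn : (0:ℝ) < q ^ (m + 1) := pow_pos hqpos _
  have hd : v (m + 1) - v m =
      ∑ k ∈ range (m + 1), (1 - (lam k + r) / mu1) * (mu2 / mu1) ^ (m - k) := by
    rw [hv (m + 1), hv m, Finset.sum_range_succ]
    ring
  have hRHS :
      ((∑ j ∈ range (m + 1 + 1), lam j * q ^ j) / (∑ j ∈ range (m + 1 + 1), q ^ j) -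
        mu2 * (1 - r / mu1) *
          ((∑ j ∈ range (m + 1 + 1), q ^ j - 1) / (∑ j ∈ range (m + 1 + 1), q ^ j))) /
        (q ^ (m + 1) / (∑ j ∈ range (m + 1 + 1), q ^ j)) =
      ((∑ j ∈ range (m + 1 + 1), lam j * q ^ j) -
        mu2 * (1 - r / mu1) * ((∑ j ∈ range (m + 1 + 1), q ^ j) - 1)) / q ^ (m + 1) := by
    rw [div_div_eq_mul_div]
    congr 1
    field_simp
  rw [hd, hRHS, eq_div_iff hqn.ne']
  have key : ∀ k ∈ range (m + 1),
      ((1 - (lam k + r) / mu1) * (mu2 / mu1) ^ (m - k)) * (mu2 * q ^ (m + 1)) =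
        mu2 * (1 - r / mu1) * q ^ (k + 1) - lam k * q ^ k := by
    intro k hk
    obtain ⟨d, rfl⟩ := Nat.exists_eq_add_of_le (Nat.lt_succ_iff.mp (mem_range.mp hk))
    simp only [Nat.add_sub_cancel_left, hq]
    simp only [div_pow]
    field_simp
    ring
  have h1 : (∑ k ∈ range (m + 1), (1 - (lam k + r) / mu1) * (mu2 / mu1) ^ (m - k)) *
        (mu2 * q ^ (m + 1)) =
      mu2 * (1 - r / mu1) * (∑ k ∈ range (m + 1), q ^ (k + 1)) -
        ∑ k ∈ range (m + 1), lam k * q ^ k := by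
    rw [Finset.sum_mul, Finset.sum_congr rfl key, Finset.sum_sub_distrib, ← Finset.mul_sum]
  rw [Finset.sum_range_succ (fun j => lam j * q ^ j) (m + 1),
    Finset.sum_range_succ' (fun j => q ^ j) (m + 1)]
  simp only [pow_zero]
  linear_combination -h1
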